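/- For a prime power p^v, a modulus q with p | q, and a divisor q* of q, the sum over primitive Dirichlet characters χ* modulo q* of χ*(p^v) equals the sum over divisors d of gcd(p^v - 1, q*) of φ(d)·μ(q*/d) when p does not divide q*, and equals 0 when p divides q* and q* > 1. -/

import Mathlib

open Finset DirichletCharacter

-- Lemma 1: FactorsThrough is closed under gcd
lemma factorsThrough_gcd {R : Type*} [CommMonoidWithZero R] {n : ℕ} [NeZero n]
    {χ : DirichletCharacter R n} {d e : ℕ}
    (hd : χ.FactorsThrough d) (he : χ.FactorsThrough e) :
    χ.FactorsThrough (Nat.gcd d e) := by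
  have hdn : d ∣ n := hd.dvd
  have hen : e ∣ n := he.dvd
  haveI : NeZero d := ⟨fun h => NeZero.ne n (Nat.eq_zero_of_zero_dvd (h ▸ hdn))⟩
  haveI : NeZero e := ⟨fun h => NeZero.ne n (Nat.eq_zero_of_zero_dvd (h ▸ hen))⟩
  have hg : Nat.gcd d e ∣ n := (Nat.gcd_dvd_left d e).trans hdn
  rw [factorsThrough_iff_ker_unitsMap hg]
  rw [factorsThrough_iff_ker_unitsMap hdn] at hd
  rw [factorsThrough_iff_ker_unitsMap hen] at he
  intro u hu
  set a : ℕ := (u : ZMod n).val with ha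
  have hau : ((a : ZMod n)) = (u : ZMod n) := by
    simp [ha, ZMod.natCast_val, ZMod.cast_id]
  have h1 : (a : ZMod (Nat.gcd d e)) = 1 := by
    have : ((ZMod.unitsMap hg u : (ZMod (Nat.gcd d e))ˣ) : ZMod (Nat.gcd d e)) = 1 := by
      rw [hu]; rfl
    rw [ZMod.unitsMap_def, Units.coe_map] at this
    rw [← hau] at this
    simpa using this
  have hmod : a ≡ 1 [MOD Nat.gcd d e] := by
    rwa [← ZMod.natCast_eq_natCast_iff, Nat.cast_one]
  obtain ⟨k, hkd, hke⟩ := Nat.chineseRemainder' hmod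
  have hlcm : Nat.lcm d e ∣ n := Nat.lcm_dvd hdn hen
  have hkd' : (k : ZMod d) = (a : ZMod d) := (ZMod.natCast_eq_natCast_iff _ _ _).mpr hkd
  have hke' : (k : ZMod e) = 1 := by
    have := (ZMod.natCast_eq_natCast_iff _ _ _).mpr hke
    simpa using this
  -- k is a unit mod lcm d e
  have hkad : IsUnit (k : ZMod d) := by
    rw [hkd']
    have h2 : IsUnit ((a : ZMod n)) := hau ▸ u.isUnit
    have := h2.map (ZMod.castHom hdn (ZMod d))
    simpa using this
  have hkae : IsUnit (k : ZMod e) := hke' ▸ isUnit_one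
  have hcop : Nat.Coprime k (Nat.lcm d e) := by
    have cd : Nat.Coprime k d := (ZMod.isUnit_iff_coprime k d).mp hkad
    have ce : Nat.Coprime k e := (ZMod.isUnit_iff_coprime k e).mp hkae
    exact Nat.Coprime.coprime_dvd_right (Nat.lcm_dvd_mul d e) (cd.mul_right ce)
  haveI : NeZero (Nat.lcm d e) :=
    ⟨fun h => NeZero.ne n (Nat.eq_zero_of_zero_dvd (h ▸ hlcm))⟩
  have hkl : IsUnit (k : ZMod (Nat.lcm d e)) := (ZMod.isUnit_iff_coprime k _).mpr hcop
  obtain ⟨w, hw⟩ := ZMod.unitsMap_surjective hlcm hkl.unit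
  set b : ℕ := (w : ZMod n).val with hb
  have hbw : ((b : ZMod n)) = (w : ZMod n) := by
    simp [hb, ZMod.natCast_val, ZMod.cast_id]
  have hbk : (b : ZMod (Nat.lcm d e)) = (k : ZMod (Nat.lcm d e)) := by
    have : ((ZMod.unitsMap hlcm w : (ZMod (Nat.lcm d e))ˣ) : ZMod _) = (k : ZMod (Nat.lcm d e)) := by
      rw [hw, IsUnit.unit_spec]
    rw [ZMod.unitsMap_def, Units.coe_map, ← hbw] at this
    simpa using this
  have hbkmod : b ≡ k [MOD Nat.lcm d e] := (ZMod.natCast_eq_natCast_iff _ _ _).mp hbk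
  have hbd : (b : ZMod d) = (a : ZMod d) := by
    rw [(ZMod.natCast_eq_natCast_iff _ _ _).mpr (hbkmod.of_dvd (Nat.dvd_lcm_left d e)), hkd']
  have hbe : (b : ZMod e) = 1 := by
    rw [(ZMod.natCast_eq_natCast_iff _ _ _).mpr (hbkmod.of_dvd (Nat.dvd_lcm_right d e)), hke']
  -- unitsMap hdn w = unitsMap hdn u
  have hw1 : ZMod.unitsMap hdn w = ZMod.unitsMap hdn u := by
    ext
    rw [ZMod.unitsMap_def, Units.coe_map, Units.coe_map, ← hbw, ← hau]
    simpa using hbd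
  have hw2 : ZMod.unitsMap hen w = 1 := by
    ext
    rw [ZMod.unitsMap_def, Units.coe_map, ← hbw]
    simpa using hbe
  have hmem1 : u * w⁻¹ ∈ (ZMod.unitsMap hdn).ker := by
    rw [MonoidHom.mem_ker, map_mul, map_inv, hw1, mul_inv_cancel]
  have hmem2 : w ∈ (ZMod.unitsMap hen).ker := hw2
  have key := mul_mem (hd hmem1) (he hmem2)
  rw [MonoidHom.mem_ker, map_mul] at key
  rw [MonoidHom.mem_ker]
  calc (MulChar.toUnitHom χ) u = (MulChar.toUnitHom χ) (u * w⁻¹ * w) := by group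
    _ = (MulChar.toUnitHom χ) (u * w⁻¹) * (MulChar.toUnitHom χ) w := map_mul _ _ _
    _ = 1 := key

-- Lemma 2: conductor is invariant under changeLevel
lemma conductor_changeLevel {R : Type*} [CommMonoidWithZero R] {d m : ℕ} [NeZero m]
    (h : d ∣ m) (ψ : DirichletCharacter R d) :
    (changeLevel h ψ).conductor = ψ.conductor := by
  haveI : NeZero d := ⟨fun hh => NeZero.ne m (Nat.eq_zero_of_zero_dvd (hh ▸ h))⟩
  set χ := changeLevel h ψ with hχ
  have hle : χ.conductor ≤ ψ.conductor := by
    apply Nat.sInf_le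
    rw [conductorSet, Set.mem_setOf_eq]
    obtain ⟨hd, ψ₀, hψ₀⟩ := ψ.factorsThrough_conductor
    exact ⟨hd.trans h, ψ₀, by rw [hχ, changeLevel_trans ψ₀ hd h, ← hψ₀]⟩
  have hge : ψ.conductor ≤ χ.conductor := by
    have hft : χ.FactorsThrough (Nat.gcd d χ.conductor) :=
      factorsThrough_gcd ⟨h, ψ, rfl⟩ χ.factorsThrough_conductor
    obtain ⟨hgm, ψ₁, hψ₁⟩ := hft
    have hgd : Nat.gcd d χ.conductor ∣ d := Nat.gcd_dvd_left _ _
    have : changeLevel h (changeLevel hgd ψ₁) = changeLevel h ψ := by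
      rw [← changeLevel_trans]
      exact hψ₁.symm
    have hψeq : ψ = changeLevel hgd ψ₁ := (changeLevel_injective h this).symm
    have h1 : ψ.conductor ≤ Nat.gcd d χ.conductor :=
      Nat.sInf_le ⟨hgd, ψ₁, hψeq⟩
    exact h1.trans (Nat.le_of_dvd (Nat.pos_of_ne_zero (conductor_ne_zero χ))
      (Nat.gcd_dvd_right _ _))
  exact le_antisymm hle hge

open Classical in
-- Lemma 3: sum over all characters = sum over divisors of sums over primitive characters
lemma sum_divisors_primitive_eq (a m : ℕ) (hm : m ≠ 0) (ha : Nat.Coprime a m) :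
    ∑ d ∈ m.divisors, (∑ χ ∈ Finset.univ.filter
        (fun χ : DirichletCharacter ℂ d => χ.IsPrimitive), χ (a : ZMod d)) =
      ∑ χ : DirichletCharacter ℂ m, χ (a : ZMod m) := by
  haveI : NeZero m := ⟨hm⟩
  rw [← Finset.sum_fiberwise_of_maps_to (g := fun χ : DirichletCharacter ℂ m => χ.conductor)
    (t := m.divisors) (fun χ _ => Nat.mem_divisors.mpr ⟨χ.conductor_dvd_level, hm⟩)]
  refine Finset.sum_congr rfl fun d hd => ?_
  have hdm : d ∣ m := Nat.dvd_of_mem_divisors hd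
  refine Finset.sum_bij (fun ψ _ => changeLevel hdm ψ) ?_ ?_ ?_ ?_
  · intro ψ hψ
    simp only [Finset.mem_filter, Finset.mem_univ, true_and] at hψ ⊢
    rw [conductor_changeLevel hdm ψ]
    exact hψ
  · intro ψ₁ _ ψ₂ _ hh
    exact changeLevel_injective hdm hh
  · intro χ hχ
    simp only [Finset.mem_filter, Finset.mem_univ, true_and] at hχ
    have hft : χ.FactorsThrough d := hχ ▸ χ.factorsThrough_conductor
    obtain ⟨hdvd, ψ, hψ⟩ := hft
    refine ⟨ψ, ?_, ?_⟩
    · simp only [Finset.mem_filter, Finset.mem_univ, true_and]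
      rw [IsPrimitive, ← conductor_changeLevel hdm ψ, ← hψ, hχ]
    · exact hψ.symm
  · intro ψ hψ
    have hu : IsUnit ((a : ZMod m)) := (ZMod.isUnit_iff_coprime a m).mpr ha
    rw [← hu.unit_spec, changeLevel_eq_cast_of_dvd ψ hdm hu.unit, hu.unit_spec,
      ZMod.cast_natCast hdm]

open Classical in
/-- For a prime power `p^v`, a modulus `q` with `p ∣ q`, and a divisor `q*` of `q`,
the sum over primitive Dirichlet characters `χ*` mod `q*` of `χ*(p^v)` equals
`∑_{d ∣ gcd(p^v - 1, q*)} φ(d) μ(q*/d)` when `p ∤ q*`, and equals `0` when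
`p ∣ q*` and `q* > 1`. -/
theorem stmt0 (p v q qs : ℕ) (hp : p.Prime) (hv : 1 ≤ v) (hq : 0 < q)
    (hpq : p ∣ q) (hqs : qs ∣ q) :
    (¬ p ∣ qs →
      ∑ χ ∈ Finset.univ.filter (fun χ : DirichletCharacter ℂ qs => χ.IsPrimitive),
        χ ((p : ZMod qs) ^ v) =
      ((∑ d ∈ (Nat.gcd (p ^ v - 1) qs).divisors,
        (Nat.totient d : ℤ) * ArithmeticFunction.moebius (qs / d) : ℤ) : ℂ)) ∧
    (p ∣ qs → 1 < qs →
      ∑ χ ∈ Finset.univ.filter (fun χ : DirichletCharacter ℂ qs => χ.IsPrimitive),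
        χ ((p : ZMod qs) ^ v) = 0) := by
  have hqs0 : qs ≠ 0 := fun h => hq.ne' (Nat.eq_zero_of_zero_dvd (h ▸ hqs))
  haveI : NeZero qs := ⟨hqs0⟩
  have hcast : ∀ m : ℕ, ((p ^ v : ℕ) : ZMod m) = (p : ZMod m) ^ v := fun m => by push_cast; rfl
  constructor
  · intro hpqs
    -- Möbius inversion on the set of n not divisible by p
    set s : Set ℕ := {n | ¬ p ∣ n} with hs_def
    have hs : ∀ m n, m ∣ n → n ∈ s → m ∈ s := fun m n hmn hn hc => hn (hc.trans hmn)
    set f : ℕ → ℂ := fun d => ∑ χ ∈ Finset.univ.filter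
        (fun χ : DirichletCharacter ℂ d => χ.IsPrimitive), χ ((p ^ v : ℕ) : ZMod d) with hf
    set g : ℕ → ℂ := fun n => ∑ χ : DirichletCharacter ℂ n, χ ((p ^ v : ℕ) : ZMod n) with hg
    have hkey : ∀ n > 0, n ∈ s → (∑ i ∈ n.divisors, f i) = g n := by
      intro n hn hns
      exact sum_divisors_primitive_eq (p ^ v) n hn.ne'
        (Nat.Coprime.pow_left v (hp.coprime_iff_not_dvd.mpr hns))
    have hmob := (ArithmeticFunction.sum_eq_iff_sum_mul_moebius_eq_on s hs).mp hkey qs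
      (Nat.pos_of_ne_zero hqs0) hpqs
    rw [Nat.sum_divisorsAntidiagonal'
      (f := fun x y => ((ArithmeticFunction.moebius x : ℤ) : ℂ) * g y)] at hmob
    -- compute g d
    have hgval : ∀ d ∈ qs.divisors, g d =
        if ((p ^ v : ℕ) : ZMod d) = 1 then (d.totient : ℂ) else 0 := by
      intro d hd
      haveI : NeZero d := ⟨Nat.pos_of_mem_divisors hd |>.ne'⟩
      exact DirichletCharacter.sum_characters_eq ℂ _
    have hLHS : ∑ χ ∈ Finset.univ.filter
        (fun χ : DirichletCharacter ℂ qs => χ.IsPrimitive), χ ((p : ZMod qs) ^ v) = f qs := by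
      rw [hf]
      simp only [hcast]
    rw [hLHS, ← hmob]
    have hdiveq : (Nat.gcd (p ^ v - 1) qs).divisors =
        qs.divisors.filter (fun d => ((p ^ v : ℕ) : ZMod d) = 1) := by
      ext d
      simp only [Nat.mem_divisors, Finset.mem_filter, Nat.dvd_gcd_iff]
      have hpv1 : 1 ≤ p ^ v := Nat.one_le_pow _ _ hp.pos
      have hcond : (((p ^ v : ℕ) : ZMod d) = 1) ↔ d ∣ p ^ v - 1 := by
        rw [show (1 : ZMod d) = ((1 : ℕ) : ZMod d) by simp, ZMod.natCast_eq_natCast_iff]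
        constructor
        · intro h
          exact (Nat.modEq_iff_dvd' hpv1).mp h.symm
        · intro h
          exact ((Nat.modEq_iff_dvd' hpv1).mpr h).symm
      constructor
      · rintro ⟨⟨h1, h2⟩, -⟩
        exact ⟨⟨h2, hqs0⟩, hcond.mpr h1⟩
      · rintro ⟨⟨h2, -⟩, h1⟩
        exact ⟨⟨hcond.mp h1, h2⟩, Nat.gcd_ne_zero_right hqs0⟩
    push_cast
    rw [hdiveq, Finset.sum_filter]
    refine Finset.sum_congr rfl fun d hd => ?_
    rw [hgval d hd]
    split_ifs with h
    · ring
    · ring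
  · intro hpd hlt
    have hnu : ¬ IsUnit ((p : ZMod qs) ^ v) := by
      rw [← hcast, ZMod.isUnit_iff_coprime]
      intro hcop
      have : p ∣ 1 := by
        have h1 : p ∣ Nat.gcd (p ^ v) qs :=
          Nat.dvd_gcd (dvd_pow_self p (by omega)) hpd
        rwa [hcop] at h1
      exact hp.one_lt.ne' (Nat.dvd_one.mp this)
    refine Finset.sum_eq_zero fun χ _ => χ.map_nonunit hnu
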